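/- arXiv:2203.15938 — 4 statements merged into one kernel-verified Lean document; each statement's English description precedes it below -/
import Mathlib

section
/- Let V = V₁ + iV₂ satisfy Assumption (iR) on (0,∞) and fix δ ∈ (0,1/4). Then there exist c > 0 and b₀ > 0 such that for all b ≥ b₀ and every φ ∈ C_c^∞((0,∞),ℂ) whose support is disjoint from the interval Ω'_b := (x_b − δ·x_b^{−ν}, x_b + δ·x_b^{−ν}), one has c·δ·(V₂'(x_b))^{2/3}·(Υ(x_b))^{−1}·‖φ‖_{L²(0,∞)} ≤ ‖−φ'' + V·φ − λ_b·φ‖_{L²(0,∞)}. -/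
open MeasureTheory Filter
open scoped ENNReal NNReal

/-- The L² norm over the half-line (0,∞). -/
noncomputable def L2P (f : ℝ → ℂ) : ℝ :=
  (eLpNorm f 2 (volume.restrict (Set.Ioi (0:ℝ)))).toReal

/-- The L² norm over ℝ. -/
noncomputable def L2R (f : ℝ → ℂ) : ℝ :=
  (eLpNorm f 2 volume).toReal

/-- V₂ = Im V. -/
noncomputable def ImV (V : ℝ → ℂ) (x : ℝ) : ℝ := (V x).im

/-- V₁ = Re V. -/
noncomputable def ReV (V : ℝ → ℂ) (x : ℝ) : ℝ := (V x).re

/-- Υ(x) = x^ν · (V₂'(x))^(−1/3). -/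
noncomputable def Upsilon (V : ℝ → ℂ) (ν x : ℝ) : ℝ :=
  x ^ ν * deriv (ImV V) x ^ (-(1:ℝ)/3)

/-- The complex number ρ·e^{iθ}. -/
noncomputable def polarC (ρ θ : ℝ) : ℂ := (ρ : ℂ) * Complex.exp (Complex.I * (θ : ℂ))

/-- κ_b = |r·e^{iθ} − r_b·e^{iθ_b}| with r = √(l²+1), θ = arg(l+i),
r_b = √((V₁'(x_b)/V₂'(x_b))²+1), θ_b = arg(V₁'(x_b)/V₂'(x_b) + i). -/
noncomputable def kappaB (V : ℝ → ℂ) (l xb : ℝ) : ℝ :=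
  ‖(polarC (Real.sqrt (l ^ 2 + 1)) (Complex.arg ((l : ℂ) + Complex.I)) -
      polarC (Real.sqrt ((deriv (ReV V) xb / deriv (ImV V) xb) ^ 2 + 1))
        (Complex.arg (((deriv (ReV V) xb / deriv (ImV V) xb : ℝ) : ℂ) + Complex.I)))‖

/-- κ(r,θ) = inf over nonzero C_c^∞ functions φ of ‖−φ'' + r e^{iθ} x φ‖/‖φ‖,
the reciprocal of the norm of the inverse of the complex Airy operator A_{r,θ}. -/
noncomputable def airyResInvNorm (ρ θ : ℝ) : ℝ :=
  sInf { c : ℝ | ∃ φ : ℝ → ℂ, ContDiff ℝ (⊤ : ℕ∞) φ ∧ HasCompactSupport φ ∧ φ ≠ 0 ∧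
    c = L2R (fun x => -(deriv (deriv φ) x) + polarC ρ θ * (x : ℂ) * φ x) / L2R φ }

/-- Assumption (iR): V locally bounded on [0,∞), C² on (x₀,∞), Re V ≥ 0 a.e.,
V₂ unbounded and eventually increasing, controlled derivatives with parameter ν,
Υ → 0, and V₁'/V₂' → l ∈ [0,∞). -/
structure AssumptionIR (V : ℝ → ℂ) (x₀ ν l : ℝ) : Prop where
  x0_nonneg : 0 ≤ x₀
  nu_ge : -1 ≤ ν
  l_nonneg : 0 ≤ l
  loc_bdd : ∀ K : Set ℝ, IsCompact K → ∃ M : ℝ, ∀ x ∈ K ∩ Set.Ici (0:ℝ), ‖V x‖ ≤ M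
  smooth : ContDiffOn ℝ 2 V (Set.Ioi x₀)
  re_nonneg : ∀ᵐ x ∂(volume.restrict (Set.Ioi (0:ℝ))), 0 ≤ (V x).re
  im_unbounded : Tendsto (ImV V) atTop atTop
  im_deriv_pos : ∀ x > x₀, 0 < deriv (ImV V) x
  controlled : ∃ c > 0, ∀ x > x₀,
      deriv (ImV V) x ≤ c * ImV V x * x ^ ν ∧
      ‖deriv (deriv V) x‖ ≤ c * deriv (ImV V) x * x ^ ν
  upsilon_small : Tendsto (fun x => Upsilon V ν x) atTop (nhds 0)
  ratio_lim : Tendsto (fun x => deriv (ReV V) x / deriv (ImV V) x) atTop (nhds l)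

lemma aux_im_hasDerivAt {V : ℝ → ℂ} {x : ℝ} (hx : DifferentiableAt ℝ V x) :
    HasDerivAt (ImV V) ((deriv V x).im) x := by
  have h := Complex.imCLM.hasFDerivAt.comp_hasDerivAt x hx.hasDerivAt
  exact h

lemma aux_im_deriv2 {V : ℝ → ℂ} {s : Set ℝ} (hs : IsOpen s) (hV : ContDiffOn ℝ 2 V s)
    {x : ℝ} (hx : x ∈ s) :
    HasDerivAt (deriv (ImV V)) ((deriv (deriv V) x).im) x := by
  have hV1 : DifferentiableOn ℝ V s := hV.differentiableOn (by norm_num)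
  have hdV : ContDiffOn ℝ 1 (deriv V) s := hV.deriv_of_isOpen hs (by norm_num)
  have h2 : DifferentiableAt ℝ (deriv V) x :=
    (hdV.differentiableOn (by norm_num)).differentiableAt (hs.mem_nhds hx)
  have key : HasDerivAt (fun y => (deriv V y).im) ((deriv (deriv V) x).im) x := by
    have h := Complex.imCLM.hasFDerivAt.comp_hasDerivAt x h2.hasDerivAt
    exact h
  apply key.congr_of_eventuallyEq
  filter_upwards [hs.mem_nhds hx] with y hy
  exact (aux_im_hasDerivAt ((hV1 y hy).differentiableAt (hs.mem_nhds hy))).deriv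

lemma aux_sq_eLpNorm (f : ℝ → ℂ) (μ : Measure ℝ) :
    (eLpNorm f 2 μ) ^ 2 = ∫⁻ x, (‖f x‖₊ : ℝ≥0∞) ^ 2 ∂μ := by
  rw [eLpNorm_eq_lintegral_rpow_enorm_toReal (by norm_num) ENNReal.ofNat_ne_top]
  simp only [ENNReal.toReal_ofNat]
  rw [← ENNReal.rpow_natCast (_ ^ (1/(2:ℝ))) 2, ← ENNReal.rpow_mul]
  norm_num
  rfl

set_option maxHeartbeats 3200000 in
/-- quadratic-form estimate away from the turning point x_b
(Proposition `prop:away.iR` of the paper). -/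
theorem statement1 (V : ℝ → ℂ) (x₀ ν l δ : ℝ) (hV : AssumptionIR V x₀ ν l)
    (hδ : δ ∈ Set.Ioo (0:ℝ) (1/4)) :
    ∃ c > 0, ∃ b₀ : ℝ, ∀ b ≥ b₀, ∀ xb : ℝ, x₀ < xb → ImV V xb = b →
      ∀ φ : ℝ → ℂ, ContDiff ℝ (⊤ : ℕ∞) φ → HasCompactSupport φ →
        tsupport φ ⊆ Set.Ioi 0 →
        (∀ x ∈ Set.Ioo (xb - δ * xb ^ (-ν)) (xb + δ * xb ^ (-ν)), φ x = 0) →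
        c * δ * deriv (ImV V) xb ^ ((2:ℝ)/3) * (Upsilon V ν xb)⁻¹ * L2P φ ≤
          L2P (fun x => -(deriv (deriv φ) x) + V x * φ x - V xb * φ x) := by
  obtain ⟨hδ0, hδ4⟩ := hδ
  obtain ⟨c₁, hc₁, hctrl⟩ := hV.controlled
  set K : ℝ := (3/4:ℝ) ^ ν + (5/4:ℝ) ^ ν with hKdef
  have hK : 0 < K :=
    add_pos (Real.rpow_pos_of_pos (by norm_num) _) (Real.rpow_pos_of_pos (by norm_num) _)
  set E0 : ℝ := Real.exp (-(c₁ * K)) with hE0def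
  have hE0 : 0 < E0 := Real.exp_pos _
  set cF : ℝ := min E0 (2 / c₁) with hcFdef
  have hcF : 0 < cF := lt_min hE0 (by positivity)
  set X₀ : ℝ := max 1 (2 * x₀ + 1) with hX0def
  obtain ⟨M₀, hM₀⟩ := hV.loc_bdd (Set.Icc 0 X₀) isCompact_Icc
  obtain ⟨M, hM⟩ := hV.loc_bdd (Set.Icc 0 x₀) isCompact_Icc
  refine ⟨cF, hcF, max (2 * max M 0 + 1) (max M₀ 0 + 1), ?_⟩
  intro b hb xb hxbx₀ hVxb φ hφ hφc hφsupp hφzero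
  have hb1 : 2 * max M 0 + 1 ≤ b := le_trans (le_max_left _ _) hb
  have hb2 : max M₀ 0 + 1 ≤ b := le_trans (le_max_right _ _) hb
  have hbpos : 0 < b := by
    have h0 : (0:ℝ) ≤ max M 0 := le_max_right _ _
    linarith only [h0, hb1]
  have hxb0 : (0:ℝ) ≤ xb := le_trans hV.x0_nonneg hxbx₀.le
  -- xb is large
  have hxbX : X₀ < xb := by
    by_contra hle
    push_neg at hle
    have h1 : ‖V xb‖ ≤ M₀ := hM₀ xb ⟨⟨hxb0, hle⟩, hxb0⟩
    have h2 : b ≤ M₀ := by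
      rw [← hVxb]
      calc ImV V xb ≤ |(V xb).im| := le_abs_self _
        _ ≤ ‖V xb‖ := Complex.abs_im_le_norm _
        _ = ‖V xb‖ := rfl
        _ ≤ M₀ := h1
    have h3 : M₀ ≤ max M₀ 0 := le_max_left _ _
    linarith only [h2, h3, hb2]
  have hxb1 : (1:ℝ) < xb := lt_of_le_of_lt (le_max_left _ _) hxbX
  have hxb2x0 : 2 * x₀ + 1 < xb := lt_of_le_of_lt (le_max_right _ _) hxbX
  have hxbpos : (0:ℝ) < xb := by linarith only [hxb1]
  set h : ℝ := δ * xb ^ (-ν) with hhdef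
  have hhpos : 0 < h := mul_pos hδ0 (Real.rpow_pos_of_pos hxbpos _)
  have hxbnu : xb ^ (-ν) ≤ xb := by
    calc xb ^ (-ν) ≤ xb ^ (1:ℝ) :=
          Real.rpow_le_rpow_of_exponent_le hxb1.le (by linarith only [hV.nu_ge])
      _ = xb := Real.rpow_one xb
  have hh4 : h ≤ xb / 4 := by
    have h1 : h ≤ (1/4) * xb := by
      apply mul_le_mul hδ4.le hxbnu (Real.rpow_nonneg hxbpos.le _) (by norm_num)
    linarith only [h1]
  have hJlo : x₀ < xb - h := by linarith only [hV.x0_nonneg, hxb2x0, hh4]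
  set A : ℝ := deriv (ImV V) xb with hAdef
  have hA : 0 < A := hV.im_deriv_pos xb hxbx₀
  set m : ℝ := cF * (h * A) with hmdef
  have hmpos : 0 < m := by positivity
  -- coefficient equality
  have hinv : (Upsilon V ν xb)⁻¹ = xb ^ (-ν) * A ^ ((1:ℝ)/3) := by
    have : Upsilon V ν xb = xb ^ ν * A ^ (-(1:ℝ)/3) := rfl
    rw [this, mul_inv, ← Real.rpow_neg hxbpos.le, ← Real.rpow_neg hA.le]
    norm_num
  have hcoef : cF * δ * A ^ ((2:ℝ)/3) * (Upsilon V ν xb)⁻¹ = m := by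
    rw [hinv]
    have : cF * δ * A ^ ((2:ℝ)/3) * (xb ^ (-ν) * A ^ ((1:ℝ)/3))
        = cF * (δ * xb ^ (-ν)) * (A ^ ((2:ℝ)/3) * A ^ ((1:ℝ)/3)) := by ring
    rw [this, ← Real.rpow_add hA]
    norm_num [hmdef, hhdef]
    ring
  -- smoothness of V facts
  have hVdiff : ∀ y ∈ Set.Ioi x₀, DifferentiableAt ℝ V y := fun y hy =>
    (hV.smooth.differentiableOn (by norm_num)).differentiableAt (isOpen_Ioi.mem_nhds hy)
  have hImd : ∀ y ∈ Set.Ioi x₀, HasDerivAt (ImV V) (deriv (ImV V) y) y := by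
    intro y hy
    have h1 := aux_im_hasDerivAt (hVdiff y hy)
    rw [h1.deriv]
    exact h1
  have hImcont : ContinuousOn (ImV V) (Set.Ioi x₀) :=
    Complex.continuous_im.comp_continuousOn hV.smooth.continuousOn
  have mono : MonotoneOn (ImV V) (Set.Ioi x₀) := by
    have : StrictMonoOn (ImV V) (Set.Ioi x₀) :=
      strictMonoOn_of_deriv_pos (convex_Ioi x₀) hImcont
        (by rw [interior_Ioi]; exact fun y hy => hV.im_deriv_pos y hy)
    exact this.monotoneOn
  have hJsub : Set.Icc (xb - h) (xb + h) ⊆ Set.Ioi x₀ := by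
    intro y hy
    exact lt_of_lt_of_le hJlo hy.1
  have hxν_bound : ∀ y ∈ Set.Icc (xb - h) (xb + h), y ^ ν ≤ K * xb ^ ν := by
    intro y hy
    have hy1 : 3/4 * xb ≤ y := by have h0 := hy.1; linarith only [h0, hh4]
    have hy2 : y ≤ 5/4 * xb := by have h0 := hy.2; linarith only [h0, hh4]
    have hypos : 0 < y := lt_of_lt_of_le (by linarith only [hxbpos]) hy1
    have hxbnn : (0:ℝ) ≤ xb ^ ν := Real.rpow_nonneg hxbpos.le _
    rcases le_or_gt 0 ν with hν | hν
    · calc y ^ ν ≤ (5/4 * xb) ^ ν := Real.rpow_le_rpow hypos.le hy2 hν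
        _ = (5/4:ℝ) ^ ν * xb ^ ν := Real.mul_rpow (by norm_num) hxbpos.le
        _ ≤ K * xb ^ ν := by
            apply mul_le_mul_of_nonneg_right _ hxbnn
            rw [hKdef]
            have h0 : (0:ℝ) ≤ (3/4:ℝ) ^ ν := Real.rpow_nonneg (by norm_num) _
            linarith only [h0]
    · calc y ^ ν ≤ (3/4 * xb) ^ ν := Real.rpow_le_rpow_of_nonpos (by linarith only [hxbpos]) hy1 hν.le
        _ = (3/4:ℝ) ^ ν * xb ^ ν := Real.mul_rpow (by norm_num) hxbpos.le
        _ ≤ K * xb ^ ν := by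
            apply mul_le_mul_of_nonneg_right _ hxbnn
            rw [hKdef]
            have h0 : (0:ℝ) ≤ (5/4:ℝ) ^ ν := Real.rpow_nonneg (by norm_num) _
            linarith only [h0]
  have hgpos : ∀ y ∈ Set.Icc (xb - h) (xb + h), 0 < deriv (ImV V) y :=
    fun y hy => hV.im_deriv_pos y (hJsub hy)
  have hxbmem : xb ∈ Set.Icc (xb - h) (xb + h) := ⟨by linarith only [hhpos], by linarith only [hhpos]⟩
  have hprod1 : xb ^ ν * xb ^ (-ν) = 1 := by
    rw [← Real.rpow_add hxbpos]; simp
  -- Gronwall-type estimate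
  have gro : ∀ y ∈ Set.Icc (xb - h) (xb + h), E0 * A ≤ deriv (ImV V) y := by
    intro y hy
    set L : ℝ → ℝ := fun z => Real.log (deriv (ImV V) z) with hLdef
    set L' : ℝ → ℝ := fun z => (deriv (ImV V) z)⁻¹ * (deriv (deriv V) z).im with hL'def
    have hL : ∀ z ∈ Set.Icc (xb - h) (xb + h),
        HasDerivWithinAt L (L' z) (Set.Icc (xb - h) (xb + h)) z := by
      intro z hz
      have h1 : HasDerivAt (deriv (ImV V)) ((deriv (deriv V) z).im) z :=
        aux_im_deriv2 isOpen_Ioi hV.smooth (hJsub hz)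
      have h2 := (Real.hasDerivAt_log (ne_of_gt (hgpos z hz))).comp z h1
      exact h2.hasDerivWithinAt
    have hbound : ∀ z ∈ Set.Icc (xb - h) (xb + h), ‖L' z‖ ≤ c₁ * K * xb ^ ν := by
      intro z hz
      have hgz := hgpos z hz
      have hz' : z ∈ Set.Ioi x₀ := hJsub hz
      have hc := (hctrl z hz').2
      have him : |(deriv (deriv V) z).im| ≤ c₁ * deriv (ImV V) z * z ^ ν := by
        calc |(deriv (deriv V) z).im| ≤ ‖deriv (deriv V) z‖ :=
              Complex.abs_im_le_norm _
          _ = ‖deriv (deriv V) z‖ := rfl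
          _ ≤ c₁ * deriv (ImV V) z * z ^ ν := hc
      have hzν : z ^ ν ≤ K * xb ^ ν := hxν_bound z hz
      rw [hL'def, Real.norm_eq_abs, abs_mul, abs_inv, abs_of_pos hgz]
      calc (deriv (ImV V) z)⁻¹ * |(deriv (deriv V) z).im|
          ≤ (deriv (ImV V) z)⁻¹ * (c₁ * deriv (ImV V) z * z ^ ν) := by
            apply mul_le_mul_of_nonneg_left him (by positivity)
        _ = c₁ * z ^ ν := by
            rw [mul_comm c₁ (deriv (ImV V) z), mul_assoc,
              inv_mul_cancel_left₀ (ne_of_gt hgz)]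
        _ ≤ c₁ * (K * xb ^ ν) := by
            apply mul_le_mul_of_nonneg_left hzν hc₁.le
        _ = c₁ * K * xb ^ ν := by ring
    have key := (convex_Icc (xb - h) (xb + h)).norm_image_sub_le_of_norm_hasDerivWithin_le
      hL hbound hxbmem hy
    have hyb : ‖y - xb‖ ≤ h := by
      rw [Real.norm_eq_abs]
      apply abs_le.mpr
      constructor <;> [linarith only [hy.1]; linarith only [hy.2]]
    have hstep : |L y - L xb| ≤ c₁ * K := by
      have h1 : ‖L y - L xb‖ ≤ c₁ * K * xb ^ ν * ‖y - xb‖ := key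
      have h2 : c₁ * K * xb ^ ν * ‖y - xb‖ ≤ c₁ * K * xb ^ ν * h := by
        apply mul_le_mul_of_nonneg_left hyb (by positivity)
      have h3 : c₁ * K * xb ^ ν * h = c₁ * K * δ * (xb ^ ν * xb ^ (-ν)) := by
        rw [hhdef]; ring
      rw [h3, hprod1, mul_one] at h2
      have h4 : c₁ * K * δ ≤ c₁ * K := by nlinarith only [mul_pos hc₁ hK, hδ4, hδ0]
      rw [Real.norm_eq_abs] at h1
      linarith only [h1, h2, h4]
    have hlog : Real.log A - c₁ * K ≤ L y := by
      have h5 := (abs_le.mp hstep).1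
      have h6 : L xb = Real.log A := by rw [hLdef, hAdef]
      linarith only [h5, h6]
    calc E0 * A = Real.exp (Real.log A - c₁ * K) := by
          rw [Real.exp_sub, Real.exp_log hA, hE0def]
          rw [Real.exp_neg]
          field_simp
      _ ≤ Real.exp (L y) := Real.exp_le_exp.mpr hlog
      _ = deriv (ImV V) y := Real.exp_log (hgpos y hy)
  -- slope estimates
  have S1 : h * (E0 * A) ≤ ImV V (xb + h) - ImV V xb := by
    obtain ⟨ξ, hξ, hslope⟩ := exists_deriv_eq_slope (ImV V) (show xb < xb + h by linarith only [hhpos])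
      (hImcont.mono (fun z hz => lt_of_lt_of_le (show x₀ < xb from hxbx₀) hz.1))
      (fun z hz => ((hImd z (Set.mem_Ioi.mpr (by exact lt_trans hxbx₀ hz.1))).differentiableAt).differentiableWithinAt)
    have hξmem : ξ ∈ Set.Icc (xb - h) (xb + h) := ⟨by linarith only [hξ.1, hhpos], hξ.2.le⟩
    have hge := gro ξ hξmem
    rw [hslope] at hge
    have hne : xb + h - xb = h := by ring
    rw [hne] at hge
    have h6 := (le_div_iff₀ hhpos).mp hge
    have h7 : h * (E0 * A) = E0 * A * h := by ring
    linarith only [h6, h7]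
  have S2 : h * (E0 * A) ≤ ImV V xb - ImV V (xb - h) := by
    obtain ⟨ξ, hξ, hslope⟩ := exists_deriv_eq_slope (ImV V) (show xb - h < xb by linarith only [hhpos])
      (hImcont.mono (fun z hz => lt_of_lt_of_le hJlo hz.1))
      (fun z hz => ((hImd z (Set.mem_Ioi.mpr (lt_trans hJlo hz.1))).differentiableAt).differentiableWithinAt)
    have hξmem : ξ ∈ Set.Icc (xb - h) (xb + h) := ⟨hξ.1.le, by linarith only [hξ.2, hhpos]⟩
    have hge := gro ξ hξmem
    rw [hslope] at hge
    have hne : xb - (xb - h) = h := by ring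
    rw [hne] at hge
    have h6 := (le_div_iff₀ hhpos).mp hge
    have h7 : h * (E0 * A) = E0 * A * h := by ring
    linarith only [h6, h7]
  -- bounds on m
  have hAb : A ≤ c₁ * b * xb ^ ν := by
    have h1 := (hctrl xb hxbx₀).1
    rw [hVxb] at h1
    exact h1
  have hm_le1 : m ≤ h * (E0 * A) := by
    have h1 : cF * (h * A) ≤ E0 * (h * A) :=
      mul_le_mul_of_nonneg_right (min_le_left _ _) (by positivity)
    have h2 : E0 * (h * A) = h * (E0 * A) := by ring
    rw [hmdef]
    linarith only [h1, h2]
  have hm_le2 : m ≤ b - max M 0 := by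
    have h1 : m ≤ 2 / c₁ * (h * A) := by
      apply mul_le_mul_of_nonneg_right (min_le_right _ _) (by positivity)
    have h2 : h * A ≤ h * (c₁ * b * xb ^ ν) :=
      mul_le_mul_of_nonneg_left hAb hhpos.le
    have h3 : h * (c₁ * b * xb ^ ν) = c₁ * b * δ * (xb ^ ν * xb ^ (-ν)) := by
      rw [hhdef]; ring
    rw [hprod1, mul_one] at h3
    have h4 : 2 / c₁ * (h * A) ≤ 2 / c₁ * (c₁ * b * δ) := by
      apply mul_le_mul_of_nonneg_left _ (by positivity)
      rw [← h3]; exact h2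
    have h5 : 2 / c₁ * (c₁ * b * δ) = 2 * b * δ := by field_simp
    have h6 : 2 * b * δ ≤ b / 2 := by
      nlinarith only [mul_nonneg hbpos.le (by linarith only [hδ4] : (0:ℝ) ≤ 1/4 - δ)]
    linarith only [h1, h4, h5, h6, hb1, le_max_right M (0:ℝ)]
  -- the weight function
  set w : ℝ → ℝ := fun x => if xb < x then 1 else -1 with hwdef
  have hwabs : ∀ x, ∀ t : ℝ, w x * t ≤ |t| := by
    intro x t
    rw [hwdef]
    by_cases hx : xb < x
    · simp only [if_pos hx, one_mul]; exact le_abs_self t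
    · simp only [if_neg hx, neg_one_mul]; exact neg_abs_le t |>.trans_eq rfl |> fun _ => neg_le_abs t
  -- pointwise potential estimate
  have claim_pt : ∀ x ∈ Set.Ioi (0:ℝ), m * ‖φ x‖^2 ≤ w x * ((V x).im - b) * ‖φ x‖^2 := by
    intro x hx
    by_cases hzero : φ x = 0
    · simp [hzero]
    · have hxout : x ∉ Set.Ioo (xb - h) (xb + h) := fun hmem => hzero (hφzero x hmem)
      have key : m ≤ w x * ((V x).im - b) := by
        rcases lt_or_ge xb x with hgt | hle
        · have hxh : xb + h ≤ x := by
            by_contra hcon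
            push_neg at hcon
            exact hxout ⟨by linarith only [hgt, hhpos], hcon⟩
          have hw : w x = 1 := if_pos hgt
          rw [hw, one_mul]
          have h1 : ImV V (xb + h) ≤ ImV V x :=
            mono (Set.mem_Ioi.mpr (by linarith only [hJlo, hhpos])) (Set.mem_Ioi.mpr (by linarith only [hJlo, hhpos, hxh])) hxh
          have h2 : (V x).im = ImV V x := rfl
          rw [h2]
          calc m ≤ h * (E0 * A) := hm_le1
            _ ≤ ImV V (xb + h) - ImV V xb := S1
            _ ≤ ImV V x - b := by linarith only [h1, hVxb]
        · have hxh : x ≤ xb - h := by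
            by_contra hcon
            push_neg at hcon
            exact hxout ⟨hcon, by linarith only [hle, hhpos]⟩
          have hw : w x = -1 := if_neg (not_lt.mpr hle)
          rw [hw]
          rcases le_or_gt x x₀ with hxle | hxgt
          · have hVb : (V x).im ≤ max M 0 := by
              have h1 : ‖V x‖ ≤ M := hM x ⟨⟨le_of_lt hx, hxle⟩, Set.mem_Ici.mpr (le_of_lt hx)⟩
              calc (V x).im ≤ |(V x).im| := le_abs_self _
                _ ≤ ‖V x‖ := Complex.abs_im_le_norm _
                _ = ‖V x‖ := rfl
                _ ≤ max M 0 := le_trans h1 (le_max_left _ _)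
            linarith only [hm_le2, hVb]
          · have h1 : ImV V x ≤ ImV V (xb - h) :=
              mono (Set.mem_Ioi.mpr hxgt) (Set.mem_Ioi.mpr hJlo) hxh
            have h2 : (V x).im = ImV V x := rfl
            rw [h2]
            calc m ≤ h * (E0 * A) := hm_le1
              _ ≤ ImV V xb - ImV V (xb - h) := S2
              _ ≤ -1 * (ImV V x - b) := by linarith only [h1, hVxb]
      calc m * ‖φ x‖^2 ≤ (w x * ((V x).im - b)) * ‖φ x‖^2 :=
            mul_le_mul_of_nonneg_right key (by positivity)
        _ = w x * ((V x).im - b) * ‖φ x‖^2 := by ring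
  -- the integration-by-parts function
  set F : ℝ → ℂ := fun x => -(deriv φ x) * (starRingEnd ℂ) (φ x) with hFdef
  set DF : ℝ → ℂ := fun x =>
    -(deriv (deriv φ) x) * (starRingEnd ℂ) (φ x) - (Complex.normSq (deriv φ x) : ℂ) with hDFdef
  have hφ' : ContDiff ℝ (⊤:ℕ∞) (deriv φ) := (contDiff_infty_iff_deriv.mp hφ).2
  have hφ'' : ContDiff ℝ (⊤:ℕ∞) (deriv (deriv φ)) := (contDiff_infty_iff_deriv.mp hφ').2
  have hFderiv : ∀ x, HasDerivAt F (DF x) x := by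
    intro x
    have h1 : HasDerivAt (fun y => deriv φ y) (deriv (deriv φ) x) x :=
      ((hφ'.differentiable (by simp)) x).hasDerivAt
    have h2 : HasDerivAt (fun y => (starRingEnd ℂ) (φ y)) ((starRingEnd ℂ) (deriv φ x)) x :=
      ((hφ.differentiable (by simp)) x).hasDerivAt.star
    have h3 := (h1.neg).mul h2
    refine h3.congr_deriv ?_
    rw [hDFdef]
    simp only [Pi.neg_apply]
    rw [← Complex.mul_conj (deriv φ x)]
    ring
  have hsupp3 : ∀ x, x ∉ tsupport φ → φ x = 0 ∧ deriv φ x = 0 ∧ deriv (deriv φ) x = 0 := by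
    intro x hx
    refine ⟨image_eq_zero_of_notMem_tsupport hx, ?_, ?_⟩
    · by_contra hne
      exact hx (support_deriv_subset (by simpa [Function.mem_support] using hne))
    · by_contra hne
      have h1 : x ∈ tsupport (deriv φ) :=
        support_deriv_subset (by simpa [Function.mem_support] using hne)
      have h2 : tsupport (deriv φ) ⊆ tsupport φ :=
        closure_minimal support_deriv_subset (isClosed_tsupport φ)
      exact hx (h2 h1)
  have hFcs : HasCompactSupport F := by
    apply HasCompactSupport.intro hφc
    intro x hx
    obtain ⟨e0, e1, e2⟩ := hsupp3 x hx
    simp [hFdef, e0]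
  have hφxb : φ xb = 0 := hφzero xb ⟨by linarith only [hhpos], by linarith only [hhpos]⟩
  have hφ0 : φ 0 = 0 := by
    apply image_eq_zero_of_notMem_tsupport
    intro hc
    exact lt_irrefl 0 (Set.mem_Ioi.mp (hφsupp hc))
  have hFxb : F xb = 0 := by rw [hFdef]; simp [hφxb]
  have hF0 : F 0 = 0 := by rw [hFdef]; simp [hφ0]
  obtain ⟨R, hR⟩ := hφc.isCompact.bddAbove
  set R' : ℝ := max R xb + 1 with hR'def
  have hxbR : xb < R' := lt_of_le_of_lt (le_max_right R xb) (lt_add_one _)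
  have hR'supp : ∀ x, R' ≤ x → x ∉ tsupport φ := by
    intro x hxx hc
    have : x ≤ R := hR hc
    have : R ≤ max R xb := le_max_left _ _
    linarith
  have hφR' : φ R' = 0 := image_eq_zero_of_notMem_tsupport (hR'supp R' le_rfl)
  have hFR' : F R' = 0 := by rw [hFdef]; simp [hφR']
  have hDFcont : Continuous DF := by
    rw [hDFdef]
    apply Continuous.sub
    · exact (hφ''.continuous.neg.mul (Complex.continuous_conj.comp hφ.continuous))
    · exact Complex.continuous_ofReal.comp (Complex.continuous_normSq.comp hφ'.continuous)
  have hDFcs : HasCompactSupport DF := by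
    apply HasCompactSupport.intro hφc
    intro x hx
    obtain ⟨e0, e1, e2⟩ := hsupp3 x hx
    simp [hDFdef, e0, e1]
  have hDF_int : Integrable DF volume := hDFcont.integrable_of_hasCompactSupport hDFcs
  -- interval-integral computations
  have hint1 : ∫ x in Set.Ioo 0 xb, DF x = 0 := by
    rw [← integral_Ioc_eq_integral_Ioo, ← intervalIntegral.integral_of_le hxbpos.le]
    rw [intervalIntegral.integral_eq_sub_of_hasDerivAt (fun x _ => hFderiv x)
      (hDFcont.intervalIntegrable 0 xb)]
    rw [hFxb, hF0, sub_zero]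
  have hDFzero : ∀ x ∈ Set.Ioi R', DF x = 0 := by
    intro x hx
    have hns : x ∉ tsupport φ := hR'supp x (le_of_lt hx)
    have hφx : φ x = 0 := image_eq_zero_of_notMem_tsupport hns
    have hd1 : deriv φ x = 0 := by
      by_contra hne
      exact hns (support_deriv_subset (by simpa [Function.mem_support] using hne))
    rw [hDFdef]
    simp [hφx, hd1]
  have hint2 : ∫ x in Set.Ioi xb, DF x = 0 := by
    have hsplit : Set.Ioi xb = Set.Ioc xb R' ∪ Set.Ioi R' := (Set.Ioc_union_Ioi_eq_Ioi hxbR.le).symm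
    rw [hsplit, setIntegral_union Set.Ioc_disjoint_Ioi_same measurableSet_Ioi
      hDF_int.integrableOn hDF_int.integrableOn]
    have hz : ∫ x in Set.Ioi R', DF x = 0 := by
      rw [setIntegral_congr_fun measurableSet_Ioi hDFzero]
      simp
    have hic : ∫ x in Set.Ioc xb R', DF x = 0 := by
      rw [← intervalIntegral.integral_of_le hxbR.le]
      rw [intervalIntegral.integral_eq_sub_of_hasDerivAt (fun x _ => hFderiv x)
        (hDFcont.intervalIntegrable xb R')]
      rw [hFR', hFxb, sub_zero]
    rw [hz, hic, add_zero]
  have hDFim_int : Integrable (fun x => (DF x).im) volume := by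
    apply Continuous.integrable_of_hasCompactSupport
    · exact Complex.continuous_im.comp hDFcont
    · exact hDFcs.comp_left (g := Complex.im) (by simp)
  have hIm1 : ∫ x in Set.Ioo 0 xb, (DF x).im = 0 := by
    have := Complex.imCLM.integral_comp_comm (hDF_int.integrableOn (s := Set.Ioo 0 xb))
    simp only [Complex.imCLM_apply] at this
    rw [this, hint1]
    simp
  have hIm2 : ∫ x in Set.Ioi xb, (DF x).im = 0 := by
    have := Complex.imCLM.integral_comp_comm (hDF_int.integrableOn (s := Set.Ioi xb))
    simp only [Complex.imCLM_apply] at this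
    rw [this, hint2]
    simp
  have hwmeas : Measurable w := by
    rw [hwdef]
    exact Measurable.ite measurableSet_Ioi measurable_const measurable_const
  have hwbdd : ∀ x, ‖w x‖ ≤ 1 := by
    intro x
    rw [hwdef]
    by_cases hx : xb < x <;> simp [hx]
  have hwDF_int : Integrable (fun x => w x * (DF x).im) volume :=
    hDFim_int.bdd_mul hwmeas.aestronglyMeasurable (Eventually.of_forall hwbdd)
  have hwint : ∫ x in Set.Ioi (0:ℝ), w x * (DF x).im = 0 := by
    have hsplit : Set.Ioi (0:ℝ) = Set.Ioo 0 xb ∪ Set.Ici xb := (Set.Ioo_union_Ici_eq_Ioi hxbpos).symm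
    have hdisj : Disjoint (Set.Ioo (0:ℝ) xb) (Set.Ici xb) := by
      apply Set.disjoint_left.mpr
      intro a ha1 ha2
      exact absurd ha2 (not_le.mpr ha1.2)
    rw [hsplit, setIntegral_union hdisj measurableSet_Ici
      hwDF_int.integrableOn hwDF_int.integrableOn]
    have e1 : ∫ x in Set.Ioo (0:ℝ) xb, w x * (DF x).im = - ∫ x in Set.Ioo (0:ℝ) xb, (DF x).im := by
      rw [← integral_neg]
      apply setIntegral_congr_fun measurableSet_Ioo
      intro x hx
      have : ¬ xb < x := not_lt.mpr hx.2.le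
      simp [hwdef, this]
    have e2 : ∫ x in Set.Ici xb, w x * (DF x).im = ∫ x in Set.Ioi xb, (DF x).im := by
      rw [integral_Ici_eq_integral_Ioi]
      apply setIntegral_congr_fun measurableSet_Ioi
      intro x hx
      simp [hwdef, Set.mem_Ioi.mp hx]
    rw [e1, e2, hIm1, hIm2]
    simp
  -- the test function f
  set f : ℝ → ℂ := fun x => -(deriv (deriv φ) x) + V x * φ x - V xb * φ x with hfdef
  set μ : Measure ℝ := volume.restrict (Set.Ioi (0:ℝ)) with hμdef
  -- integrability of |φ|²
  have hφsq_cont : Continuous (fun x => ‖φ x‖^2) := (hφ.continuous.norm).pow 2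
  have hφsq_cs : HasCompactSupport (fun x => ‖φ x‖^2) :=
    hφc.comp_left (g := fun z : ℂ => ‖z‖^2) (by simp)
  have hφsq_int : Integrable (fun x => ‖φ x‖^2) μ :=
    (hφsq_cont.integrable_of_hasCompactSupport hφsq_cs).restrict
  -- G and its integral
  set G : ℝ → ℝ := fun x => m * ‖φ x‖^2 + w x * (DF x).im with hGdef
  have hGint : Integrable G μ := (hφsq_int.const_mul m).add hwDF_int.restrict
  have hGeq : ∫ x, G x ∂μ = m * ∫ x, ‖φ x‖^2 ∂μ := by
    rw [hGdef]
    rw [integral_add (hφsq_int.const_mul m) hwDF_int.restrict]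
    rw [integral_const_mul]
    have : ∫ x, w x * (DF x).im ∂μ = 0 := hwint
    rw [this, add_zero]
  -- pointwise bound G ≤ ‖f‖ ‖φ‖ on Ioi 0
  have hGpt : ∀ x ∈ Set.Ioi (0:ℝ), G x ≤ ‖f x‖ * ‖φ x‖ := by
    intro x hx
    have hid : (f x * (starRingEnd ℂ) (φ x)).im = (DF x).im + ((V x).im - b) * ‖φ x‖^2 := by
      have e1 : φ x * (starRingEnd ℂ) (φ x) = (Complex.normSq (φ x) : ℂ) := Complex.mul_conj _
      have e2 : f x * (starRingEnd ℂ) (φ x)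
          = DF x + (Complex.normSq (deriv φ x) : ℂ)
            + (V x - V xb) * (Complex.normSq (φ x) : ℂ) := by
        rw [hfdef, hDFdef]
        simp only
        rw [← e1]
        ring
      rw [e2]
      have e3 : ∀ r : ℝ, ((V x - V xb) * (r : ℂ)).im = ((V x).im - (V xb).im) * r := by
        intro r
        simp [Complex.mul_im]
      have e4 : (V xb).im = b := hVxb
      have e5 : (Complex.normSq (φ x) : ℝ) = ‖φ x‖^2 := by
        rw [← Complex.sq_norm]
      simp only [Complex.add_im, Complex.ofReal_im, e3, e4, e5, add_zero]
    have h2 : m * ‖φ x‖^2 ≤ w x * ((V x).im - b) * ‖φ x‖^2 := claim_pt x hx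
    have h3 : w x * (f x * (starRingEnd ℂ) (φ x)).im ≤ ‖f x‖ * ‖φ x‖ := by
      calc w x * (f x * (starRingEnd ℂ) (φ x)).im ≤ |(f x * (starRingEnd ℂ) (φ x)).im| :=
            hwabs x _
        _ ≤ ‖f x * (starRingEnd ℂ) (φ x)‖ := Complex.abs_im_le_norm _
        _ = ‖f x‖ * ‖φ x‖ := by
            rw [norm_mul, Complex.norm_conj]
    have h4 : w x * (f x * (starRingEnd ℂ) (φ x)).im
        = w x * (DF x).im + w x * ((V x).im - b) * ‖φ x‖^2 := by
      rw [hid]; ring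
    rw [hGdef]
    simp only
    have h5 := h4 ▸ h3
    linarith only [h2, h5]
  -- lintegral quantities
  set Tφ : ℝ≥0∞ := ∫⁻ x, (‖φ x‖₊ : ℝ≥0∞)^2 ∂μ with hTφdef
  set Tf : ℝ≥0∞ := ∫⁻ x, (‖f x‖₊ : ℝ≥0∞)^2 ∂μ with hTfdef
  have hTφ_eq : Tφ = (eLpNorm φ 2 μ)^2 := (aux_sq_eLpNorm φ μ).symm
  have hTf_eq : Tf = (eLpNorm f 2 μ)^2 := (aux_sq_eLpNorm f μ).symm
  -- finiteness
  have hTφ_fin : Tφ ≠ ⊤ := by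
    have h1 : ∀ x, (‖φ x‖₊ : ℝ≥0∞)^2 = ENNReal.ofReal (‖φ x‖^2) := by
      intro x
      rw [ENNReal.ofReal_pow (norm_nonneg _), ofReal_norm, enorm_eq_nnnorm]
    simp only [hTφdef, h1]
    exact (hφsq_int.lintegral_lt_top).ne
  have hTf_fin : Tf ≠ ⊤ := by
    obtain ⟨Mv, hMv⟩ := hV.loc_bdd (tsupport φ) hφc
    obtain ⟨Cφ, hCφ⟩ := hφc.exists_bound_of_continuous hφ.continuous
    obtain ⟨Cφ'', hCφ''⟩ := (hφc.deriv.deriv).exists_bound_of_continuous hφ''.continuous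
    set Cf : ℝ := Cφ'' + (Mv + ‖V xb‖) * Cφ with hCfdef
    have hfb : ∀ x, (‖f x‖₊ : ℝ≥0∞)^2 ≤
        (tsupport φ).indicator (fun _ => ENNReal.ofReal (Cf^2)) x := by
      intro x
      by_cases hxs : x ∈ tsupport φ
      · rw [Set.indicator_of_mem hxs]
        have hb1 : ‖f x‖ ≤ Cf := by
          rw [hfdef]
          have hVx : ‖V x‖ ≤ Mv := hMv x ⟨hxs, Set.mem_Ici.mpr (le_of_lt (hφsupp hxs))⟩
          calc ‖-(deriv (deriv φ) x) + V x * φ x - V xb * φ x‖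
              ≤ ‖-(deriv (deriv φ) x) + V x * φ x‖ + ‖V xb * φ x‖ := norm_sub_le _ _
            _ ≤ ‖-(deriv (deriv φ) x)‖ + ‖V x * φ x‖ + ‖V xb * φ x‖ := by
                linarith only [norm_add_le (-(deriv (deriv φ) x)) (V x * φ x)]
            _ ≤ Cφ'' + Mv * Cφ + ‖V xb‖ * Cφ := by
                have b1 : ‖-(deriv (deriv φ) x)‖ ≤ Cφ'' := by
                  rw [norm_neg]; exact hCφ'' x
                have b2 : ‖V x * φ x‖ ≤ Mv * Cφ := by
                  rw [norm_mul]
                  apply mul_le_mul hVx (hCφ x) (norm_nonneg _)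
                  exact le_trans (norm_nonneg _) hVx
                have b3 : ‖V xb * φ x‖ ≤ ‖V xb‖ * Cφ := by
                  rw [norm_mul]
                  apply mul_le_mul_of_nonneg_left (hCφ x) (norm_nonneg _)
                linarith only [b1, b2, b3]
            _ = Cf := by rw [hCfdef]; ring
        calc (‖f x‖₊ : ℝ≥0∞)^2 = ENNReal.ofReal (‖f x‖^2) := by
              rw [ENNReal.ofReal_pow (norm_nonneg _), ofReal_norm, enorm_eq_nnnorm]
          _ ≤ ENNReal.ofReal (Cf^2) := by
              apply ENNReal.ofReal_le_ofReal
              exact pow_le_pow_left₀ (norm_nonneg _) hb1 2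
      · have hφx : φ x = 0 := image_eq_zero_of_notMem_tsupport hxs
        have hd2 : deriv (deriv φ) x = 0 := by
          by_contra hne
          apply hxs
          have h1 : x ∈ tsupport (deriv φ) :=
            support_deriv_subset (by simpa [Function.mem_support] using hne)
          have h2 : tsupport (deriv φ) ⊆ tsupport φ := by
            apply closure_minimal _ (isClosed_tsupport φ)
            exact support_deriv_subset
          exact h2 h1
        have : f x = 0 := by rw [hfdef]; simp [hφx, hd2]
        rw [this]
        simp
    have hlt : Tf < ⊤ := by
      calc Tf ≤ ∫⁻ x, (tsupport φ).indicator (fun _ => ENNReal.ofReal (Cf^2)) x ∂μ :=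
            lintegral_mono hfb
        _ = ENNReal.ofReal (Cf^2) * μ (tsupport φ) := by
            rw [lintegral_indicator (isClosed_tsupport φ).measurableSet]
            simp [mul_comm]
        _ ≤ ENNReal.ofReal (Cf^2) * volume (tsupport φ) := by
            apply mul_le_mul_right
            rw [hμdef]
            exact Measure.restrict_apply_le _ _
        _ < ⊤ := ENNReal.mul_lt_top ENNReal.ofReal_lt_top hφc.isCompact.measure_lt_top
    exact hlt.ne
  -- the key inequality for every ε > 0
  have master : ∀ ε : ℝ, 0 < ε →
      ENNReal.ofReal m * Tφ ≤ ENNReal.ofReal (ε/2) * Tf + ENNReal.ofReal (1/(2*ε)) * Tφ := by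
    intro ε hε
    -- pointwise
    have hpt : ∀ x ∈ Set.Ioi (0:ℝ), ENNReal.ofReal (G x) ≤
        ENNReal.ofReal (ε/2) * (‖f x‖₊ : ℝ≥0∞)^2 + ENNReal.ofReal (1/(2*ε)) * (‖φ x‖₊ : ℝ≥0∞)^2 := by
      intro x hx
      have h1 : G x ≤ ε/2 * ‖f x‖^2 + 1/(2*ε) * ‖φ x‖^2 := by
        have hfφ : ‖f x‖ * ‖φ x‖ ≤ ε/2 * ‖f x‖^2 + 1/(2*ε) * ‖φ x‖^2 := by
          have hkey : ε/2 * ‖f x‖^2 + 1/(2*ε) * ‖φ x‖^2 - ‖f x‖ * ‖φ x‖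
              = (ε * ‖f x‖ - ‖φ x‖)^2 / (2*ε) := by
            field_simp
            ring
          have h9 : (0:ℝ) ≤ (ε * ‖f x‖ - ‖φ x‖)^2 / (2*ε) := by positivity
          linarith only [hkey, h9]
        exact le_trans (hGpt x hx) hfφ
      calc ENNReal.ofReal (G x) ≤ ENNReal.ofReal (ε/2 * ‖f x‖^2 + 1/(2*ε) * ‖φ x‖^2) :=
            ENNReal.ofReal_le_ofReal h1
        _ = ENNReal.ofReal (ε/2 * ‖f x‖^2) + ENNReal.ofReal (1/(2*ε) * ‖φ x‖^2) := by
            rw [ENNReal.ofReal_add (by positivity) (by positivity)]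
        _ = ENNReal.ofReal (ε/2) * (‖f x‖₊ : ℝ≥0∞)^2 + ENNReal.ofReal (1/(2*ε)) * (‖φ x‖₊ : ℝ≥0∞)^2 := by
            rw [ENNReal.ofReal_mul (by positivity), ENNReal.ofReal_mul (by positivity)]
            rw [ENNReal.ofReal_pow (norm_nonneg _), ENNReal.ofReal_pow (norm_nonneg _)]
            rw [ofReal_norm, ofReal_norm, enorm_eq_nnnorm, enorm_eq_nnnorm]
    -- integrate
    have hae : ∀ᵐ x ∂μ, ENNReal.ofReal (G x) ≤
        ENNReal.ofReal (ε/2) * (‖f x‖₊ : ℝ≥0∞)^2 + ENNReal.ofReal (1/(2*ε)) * (‖φ x‖₊ : ℝ≥0∞)^2 := by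
      rw [hμdef, ae_restrict_iff' measurableSet_Ioi]
      exact Eventually.of_forall hpt
    have step1 : ENNReal.ofReal m * Tφ = ENNReal.ofReal (∫ x, G x ∂μ) := by
      rw [hGeq]
      have hIφ : ∫ x, ‖φ x‖^2 ∂μ = Tφ.toReal := by
        rw [hTφdef]
        rw [integral_eq_lintegral_of_nonneg_ae (Eventually.of_forall (fun x => by positivity))
          (hφsq_cont.aestronglyMeasurable.restrict)]
        congr 1
        apply lintegral_congr
        intro x
        rw [ENNReal.ofReal_pow (norm_nonneg _), ofReal_norm, enorm_eq_nnnorm]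
      rw [hIφ, ENNReal.ofReal_mul hmpos.le, ENNReal.ofReal_toReal hTφ_fin]
    have step2 : ENNReal.ofReal (∫ x, G x ∂μ) ≤ ∫⁻ x, ENNReal.ofReal (G x) ∂μ := by
      set Gp : ℝ → ℝ := fun x => max (G x) 0 with hGpdef
      have hGp_int : Integrable Gp μ := hGint.pos_part
      have hle1 : ∫ x, G x ∂μ ≤ ∫ x, Gp x ∂μ :=
        integral_mono hGint hGp_int (fun x => le_max_left _ _)
      have heq : ENNReal.ofReal (∫ x, Gp x ∂μ) = ∫⁻ x, ENNReal.ofReal (Gp x) ∂μ :=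
        ofReal_integral_eq_lintegral_ofReal hGp_int
          (Eventually.of_forall (fun x => le_max_right _ _))
      have heq2 : ∀ x, ENNReal.ofReal (Gp x) = ENNReal.ofReal (G x) := by
        intro x
        rcases le_total (G x) 0 with hc | hc
        · rw [hGpdef]
          simp only [max_eq_right hc]
          rw [ENNReal.ofReal_of_nonpos hc]
          simp
        · rw [hGpdef]; simp only [max_eq_left hc]
      calc ENNReal.ofReal (∫ x, G x ∂μ) ≤ ENNReal.ofReal (∫ x, Gp x ∂μ) :=
            ENNReal.ofReal_le_ofReal hle1
        _ = ∫⁻ x, ENNReal.ofReal (Gp x) ∂μ := heq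
        _ = ∫⁻ x, ENNReal.ofReal (G x) ∂μ := by
            apply lintegral_congr
            intro x
            exact heq2 x
    have step3 : ∫⁻ x, ENNReal.ofReal (G x) ∂μ ≤
        ENNReal.ofReal (ε/2) * Tf + ENNReal.ofReal (1/(2*ε)) * Tφ := by
      calc ∫⁻ x, ENNReal.ofReal (G x) ∂μ
          ≤ ∫⁻ x, (ENNReal.ofReal (ε/2) * (‖f x‖₊ : ℝ≥0∞)^2
              + ENNReal.ofReal (1/(2*ε)) * (‖φ x‖₊ : ℝ≥0∞)^2) ∂μ := lintegral_mono_ae hae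
        _ = (∫⁻ x, ENNReal.ofReal (ε/2) * (‖f x‖₊ : ℝ≥0∞)^2 ∂μ)
              + ∫⁻ x, ENNReal.ofReal (1/(2*ε)) * (‖φ x‖₊ : ℝ≥0∞)^2 ∂μ := by
            apply lintegral_add_right'
            apply AEMeasurable.const_mul
            apply AEMeasurable.pow_const
            exact (hφ.continuous.measurable.nnnorm.coe_nnreal_ennreal).aemeasurable
        _ = ENNReal.ofReal (ε/2) * Tf + ENNReal.ofReal (1/(2*ε)) * Tφ := by
            rw [lintegral_const_mul' _ _ ENNReal.ofReal_ne_top,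
              lintegral_const_mul' _ _ ENNReal.ofReal_ne_top]
    calc ENNReal.ofReal m * Tφ = ENNReal.ofReal (∫ x, G x ∂μ) := step1
      _ ≤ ∫⁻ x, ENNReal.ofReal (G x) ∂μ := step2
      _ ≤ ENNReal.ofReal (ε/2) * Tf + ENNReal.ofReal (1/(2*ε)) * Tφ := step3
  -- convert to real numbers
  set tφ : ℝ := L2P φ with htφdef
  set tf : ℝ := L2P (fun x => -(deriv (deriv φ) x) + V x * φ x - V xb * φ x) with htfdef
  have htφ_eq : Tφ.toReal = tφ^2 := by
    have e : tφ = (eLpNorm φ 2 μ).toReal := rfl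
    rw [hTφ_eq, ENNReal.toReal_pow, e]
  have htf_eq : Tf.toReal = tf^2 := by
    have e : tf = (eLpNorm f 2 μ).toReal := rfl
    rw [hTf_eq, ENNReal.toReal_pow, e]
  have masterR : ∀ ε : ℝ, 0 < ε → m * tφ^2 ≤ ε/2 * tf^2 + 1/(2*ε) * tφ^2 := by
    intro ε hε
    have h1 := master ε hε
    have h2 := ENNReal.toReal_mono ?_ h1
    · rw [ENNReal.toReal_mul, ENNReal.toReal_ofReal hmpos.le, htφ_eq] at h2
      rw [ENNReal.toReal_add, ENNReal.toReal_mul, ENNReal.toReal_mul,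
        ENNReal.toReal_ofReal (by positivity), ENNReal.toReal_ofReal (by positivity),
        htφ_eq, htf_eq] at h2
      · exact h2
      · exact ENNReal.mul_ne_top ENNReal.ofReal_ne_top hTf_fin
      · exact ENNReal.mul_ne_top ENNReal.ofReal_ne_top hTφ_fin
    · apply ENNReal.add_ne_top.mpr
      constructor
      · exact ENNReal.mul_ne_top ENNReal.ofReal_ne_top hTf_fin
      · exact ENNReal.mul_ne_top ENNReal.ofReal_ne_top hTφ_fin
  have hfinal : m * tφ ≤ tf := by
    have htφ0 : 0 ≤ tφ := ENNReal.toReal_nonneg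
    have htf0 : 0 ≤ tf := ENNReal.toReal_nonneg
    rcases eq_or_lt_of_le htφ0 with h0 | hφpos
    · rw [← h0, mul_zero]; exact htf0
    · rcases eq_or_lt_of_le htf0 with hf0 | hfpos
      · exfalso
        have h1 := masterR (2/m) (by positivity)
        rw [← hf0] at h1
        have h2 : 1/(2*(2/m)) = m/4 := by
          rw [show (2:ℝ)*(2/m) = 4/m by ring, one_div_div]
        rw [h2] at h1
        have h3 : 0 < m * tφ^2 := by positivity
        nlinarith only [h1, h3, hmpos, hφpos]
      · have h1 := masterR (tφ/tf) (by positivity)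
        have h2 : tφ/tf/2 * tf^2 = tφ * tf / 2 := by field_simp
        have h3 : 1/(2*(tφ/tf)) * tφ^2 = tf * tφ / 2 := by field_simp
        rw [h2, h3] at h1
        have h4 : m * tφ^2 ≤ tφ * tf := by linarith only [h1]
        nlinarith only [h4, hφpos]
  calc cF * δ * deriv (ImV V) xb ^ ((2:ℝ)/3) * (Upsilon V ν xb)⁻¹ * L2P φ
      = m * tφ := by rw [← hcoef, htφdef]
    _ ≤ tf := hfinal
end

section
/- Let V = iV₂ satisfy Assumption (R) on ℝ. Then for every n ∈ ℕ there exists a constant D_n > 0, and there exists t₀ > 0 independent of n, such that for all t > t₀ and all x ∈ ℝ with |x| ≥ 1: |W_t^{(n)}(x)| ≤ D_n·(1 + W_t(x))·⟨x⟩^{−n}, where W_t(x) := V₂(tx)/V₂(t), so that W_t^{(n)}(x) = t^n·V₂^{(n)}(tx)/V₂(t). -/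
open MeasureTheory Filter

/-- The Japanese bracket ⟨x⟩ = √(1+x²). -/
noncomputable def jbr (x : ℝ) : ℝ := Real.sqrt (1 + x ^ 2)

/-- The Fourier transform 𝓕u(ξ) = (2π)^{−1/2} ∫ e^{−iξx} u(x) dx. -/
noncomputable def FT (u : ℝ → ℂ) (ξ : ℝ) : ℂ :=
  (Real.sqrt (2 * Real.pi) : ℂ)⁻¹ * ∫ x : ℝ, Complex.exp (-(Complex.I * (ξ : ℂ) * (x : ℂ))) * u x

/-- The inverse Fourier transform 𝓕⁻¹u(x) = (2π)^{−1/2} ∫ e^{ixξ} u(ξ) dξ. -/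
noncomputable def IFT (u : ℝ → ℂ) (x : ℝ) : ℂ :=
  (Real.sqrt (2 * Real.pi) : ℂ)⁻¹ * ∫ ξ : ℝ, Complex.exp (Complex.I * (x : ℂ) * (ξ : ℂ)) * u ξ

/-- ι(t) = sup_x |(1+W_t(x))⁻¹ − (1+|x|^β)⁻¹| where W_t(x) = V₂(tx)/V₂(t). -/
noncomputable def iotaR (V₂ : ℝ → ℝ) (β t : ℝ) : ℝ :=
  ⨆ x : ℝ, |(1 + V₂ (t * x) / V₂ t)⁻¹ - (1 + |x| ^ β)⁻¹|

/-- κ_β = inf over nonzero C_c^∞ φ of ‖−φ' + |x|^β φ‖/‖φ‖, the reciprocal of the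
norm of the inverse of the generalised Airy operator A_β = −∂ₓ + |x|^β. -/
noncomputable def airyBetaInvNorm (β : ℝ) : ℝ :=
  sInf { c : ℝ | ∃ φ : ℝ → ℂ, ContDiff ℝ (⊤ : ℕ∞) φ ∧ HasCompactSupport φ ∧ φ ≠ 0 ∧
    c = L2R (fun x => -(deriv φ x) + Complex.ofReal (|x| ^ β) * φ x) / L2R φ }

/-- Assumption (R): V = iV₂ with V₂ : ℝ → [0,∞) smooth, even, eventually increasing,
regularly varying of index β > 0, with controlled derivatives. -/
structure AssumptionR (V₂ : ℝ → ℝ) (β : ℝ) : Prop where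
  beta_pos : 0 < β
  nonneg : ∀ x, 0 ≤ V₂ x
  smooth : ContDiff ℝ (⊤ : ℕ∞) V₂
  even : ∀ x, V₂ (-x) = V₂ x
  eventually_incr : ∃ x₀ > 0, ∀ x > x₀, 0 < deriv V₂ x
  reg_var : ∀ x > 0, Tendsto (fun t => V₂ (t * x) / V₂ t) atTop (nhds (|x| ^ β))
  controlled_derivs : ∀ n : ℕ, 1 ≤ n → ∃ C > 0, ∀ x : ℝ,
      |iteratedDeriv n V₂ x| ≤ C * (1 + V₂ x) / jbr x ^ n

/-- Lemma `lem:Wt.asm`: uniform control of the derivatives of the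
rescaled potential W_t(x) = V₂(tx)/V₂(t), using W_t^{(n)}(x) = tⁿ V₂^{(n)}(tx)/V₂(t). -/
theorem statement10 (V₂ : ℝ → ℝ) (β : ℝ) (hV : AssumptionR V₂ β) :
    ∃ t₀ > 0, ∀ n : ℕ, 1 ≤ n → ∃ D > 0, ∀ t > t₀, ∀ x : ℝ, 1 ≤ |x| →
      |t ^ n * iteratedDeriv n V₂ (t * x) / V₂ t| ≤
        D * (1 + V₂ (t * x) / V₂ t) / jbr x ^ n := by
  obtain ⟨x₀, hx₀, hincr⟩ := hV.eventually_incr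
  have hcont : Continuous V₂ := hV.smooth.continuous
  have hmono : StrictMonoOn V₂ (Set.Ici x₀) := by
    apply strictMonoOn_of_deriv_pos (convex_Ici x₀) hcont.continuousOn
    intro x hx
    rw [interior_Ici] at hx
    exact hincr x hx
  set m := V₂ (x₀ + 2) with hm
  have hm0 : 0 < m := by
    have h1 : V₂ (x₀ + 1) < V₂ (x₀ + 2) :=
      hmono (Set.mem_Ici.2 (by linarith)) (Set.mem_Ici.2 (by linarith)) (by linarith)
    have := hV.nonneg (x₀ + 1)
    linarith
  refine ⟨x₀ + 2, by linarith, ?_⟩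
  intro n hn
  obtain ⟨C, hC, hbound⟩ := hV.controlled_derivs n hn
  refine ⟨C * Real.sqrt 2 ^ n * max (1 / m) 1, by positivity, ?_⟩
  intro t ht x hx
  have ht0 : 0 < t := by linarith
  have hVt : m ≤ V₂ t :=
    le_of_lt (hmono (Set.mem_Ici.2 (by linarith)) (Set.mem_Ici.2 (by linarith)) (by linarith))
  have hVt0 : 0 < V₂ t := lt_of_lt_of_le hm0 hVt
  have hW0 : 0 ≤ V₂ (t * x) := hV.nonneg _
  have hjx : 0 < jbr x := Real.sqrt_pos.2 (by positivity)
  have hjtx : 0 < jbr (t * x) := Real.sqrt_pos.2 (by positivity)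
  have hx2 : 1 ≤ x ^ 2 := by nlinarith [sq_abs x, abs_nonneg x]
  -- key pointwise bracket comparison
  have hkey : t * jbr x ≤ Real.sqrt 2 * jbr (t * x) := by
    have h1 : t * jbr x = Real.sqrt (t ^ 2 * (1 + x ^ 2)) := by
      rw [Real.sqrt_mul (by positivity), Real.sqrt_sq ht0.le, jbr]
    have h2 : Real.sqrt 2 * jbr (t * x) = Real.sqrt (2 * (1 + (t * x) ^ 2)) := by
      rw [jbr, ← Real.sqrt_mul (by norm_num)]
    rw [h1, h2]
    apply Real.sqrt_le_sqrt
    nlinarith [sq_nonneg t]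
  have hkeyn : t ^ n * jbr x ^ n ≤ Real.sqrt 2 ^ n * jbr (t * x) ^ n := by
    calc t ^ n * jbr x ^ n = (t * jbr x) ^ n := (mul_pow _ _ _).symm
      _ ≤ (Real.sqrt 2 * jbr (t * x)) ^ n :=
          pow_le_pow_left₀ (by positivity) hkey n
      _ = Real.sqrt 2 ^ n * jbr (t * x) ^ n := mul_pow _ _ _
  set M := max (1 / m) 1 with hM
  have hM1 : (1 : ℝ) ≤ M := le_max_right _ _
  have hMm : 1 / m ≤ M := le_max_left _ _
  have h2 : 1 + V₂ (t * x) ≤ M * (V₂ t + V₂ (t * x)) := by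
    have a1 : (1 : ℝ) ≤ (1 / m) * V₂ t := by
      rw [div_mul_eq_mul_div, one_mul, le_div_iff₀ hm0]
      linarith
    have a2 : (1 / m) * V₂ t ≤ M * V₂ t := by
      apply mul_le_mul_of_nonneg_right hMm hVt0.le
    nlinarith [mul_le_mul_of_nonneg_right hM1 hW0]
  -- main chain
  have habs : |t ^ n * iteratedDeriv n V₂ (t * x) / V₂ t| =
      t ^ n * |iteratedDeriv n V₂ (t * x)| / V₂ t := by
    rw [abs_div, abs_mul, abs_pow, abs_of_pos ht0, abs_of_pos hVt0]
  rw [habs]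
  have step1 : t ^ n * |iteratedDeriv n V₂ (t * x)| / V₂ t ≤
      t ^ n * (C * (1 + V₂ (t * x)) / jbr (t * x) ^ n) / V₂ t := by
    gcongr
    exact hbound (t * x)
  refine step1.trans ?_
  rw [div_le_div_iff₀ hVt0 (by positivity)]
  have hrw : (1 + V₂ (t * x) / V₂ t) * V₂ t = V₂ t + V₂ (t * x) := by field_simp
  rw [mul_assoc (C * Real.sqrt 2 ^ n * M), hrw]
  have hgoal : t ^ n * (C * (1 + V₂ (t * x)) / jbr (t * x) ^ n) * jbr x ^ n =
      t ^ n * (C * (1 + V₂ (t * x))) * jbr x ^ n / jbr (t * x) ^ n := by ring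
  rw [hgoal, div_le_iff₀ (by positivity)]
  have hprod := mul_le_mul h2 hkeyn (by positivity) (by positivity)
  nlinarith [mul_le_mul_of_nonneg_left hprod hC.le]
end

section
/- Let V = iV₂ satisfy Assumption (R) on ℝ with index β > 0 and let ι(t) := sup_{x∈ℝ} |(1 + W_t(x))^{−1} − (1 + |x|^β)^{−1}|, where W_t(x) := V₂(tx)/V₂(t). Then ι(t) → 0 as t → +∞. -/
open MeasureTheory Filter

lemma V2_tendsto_atTop' (V₂ : ℝ → ℝ) (β : ℝ) (hV : AssumptionR V₂ β) :
    Tendsto V₂ atTop atTop := by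
  obtain ⟨x₀, hx₀, hincr⟩ := hV.eventually_incr
  have hsm : StrictMonoOn V₂ (Set.Ici x₀) := by
    apply strictMonoOn_of_deriv_pos (convex_Ici x₀) hV.smooth.continuous.continuousOn
    intro x hx
    rw [interior_Ici] at hx
    exact hincr x hx
  set g : ℝ → ℝ := fun t => V₂ (max t (x₀ + 1)) with hg
  have hgmono : Monotone g := by
    intro a b hab
    exact hsm.monotoneOn (by simp [Set.mem_Ici])
      (by simp [Set.mem_Ici]) (max_le_max hab le_rfl)
  have heq : g =ᶠ[atTop] V₂ := by
    filter_upwards [eventually_ge_atTop (x₀ + 1)] with t ht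
    simp [hg, max_eq_left ht]
  by_cases hb : BddAbove (Set.range g)
  · exfalso
    have h1 : Tendsto g atTop (nhds (⨆ t, g t)) := tendsto_atTop_ciSup hgmono hb
    set L : ℝ := ⨆ t, g t with hL
    have hVlim : Tendsto V₂ atTop (nhds L) := h1.congr' heq
    have hLpos : 0 < L := by
      have h2 : g (x₀ + 2) ≤ L := le_ciSup hb (x₀ + 2)
      have h3 : V₂ (x₀ + 1) < V₂ (x₀ + 2) :=
        hsm (by simp [Set.mem_Ici]) (by simp [Set.mem_Ici]) (by linarith)
      have h4 : g (x₀ + 2) = V₂ (x₀ + 2) := by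
        simp [hg, max_eq_left (by linarith : x₀ + 1 ≤ x₀ + 2)]
      have := hV.nonneg (x₀ + 1)
      linarith [h4 ▸ h2]
    have h2t : Tendsto (fun t : ℝ => t * 2) atTop atTop :=
      Tendsto.atTop_mul_const two_pos tendsto_id
    have hV2 : Tendsto (fun t => V₂ (t * 2)) atTop (nhds L) := hVlim.comp h2t
    have hdiv : Tendsto (fun t => V₂ (t * 2) / V₂ t) atTop (nhds (L / L)) :=
      hV2.div hVlim hLpos.ne'
    rw [div_self hLpos.ne'] at hdiv
    have hreg := hV.reg_var 2 two_pos
    have heq2 : (1 : ℝ) = |2| ^ β := tendsto_nhds_unique hdiv hreg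
    rw [abs_two] at heq2
    have : (1 : ℝ) < 2 ^ β :=
      (Real.one_lt_rpow_iff_of_pos two_pos).mpr (Or.inl ⟨one_lt_two, hV.beta_pos⟩)
    linarith
  · exact (tendsto_atTop_atTop_of_monotone' hgmono hb).congr' heq

lemma one_sub_le_inv_one_add (W : ℝ) (hW : 0 ≤ W) : 1 - W ≤ (1 + W)⁻¹ := by
  have h1 : (0:ℝ) < 1 + W := by linarith
  rw [inv_eq_one_div, le_div_iff₀ h1]
  nlinarith


set_option maxHeartbeats 2000000 in
/-- Lemma `lem:reg.var.conv`: ι(t) → 0 as t → +∞. -/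
theorem statement12 (V₂ : ℝ → ℝ) (β : ℝ) (hV : AssumptionR V₂ β) :
    Tendsto (fun t => iotaR V₂ β t) atTop (nhds 0) := by
  obtain ⟨x₀, hx₀pos, hincr⟩ := hV.eventually_incr
  have hβ := hV.beta_pos
  have hmonoV : MonotoneOn V₂ (Set.Ici x₀) := by
    apply StrictMonoOn.monotoneOn
    apply strictMonoOn_of_deriv_pos (convex_Ici x₀) hV.smooth.continuous.continuousOn
    intro x hx
    rw [interior_Ici] at hx
    exact hincr x hx
  have htop : Tendsto V₂ atTop atTop := V2_tendsto_atTop' V₂ β hV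
  obtain ⟨M, hM0, hM⟩ : ∃ M, 0 ≤ M ∧ ∀ z ∈ Set.Icc (0:ℝ) x₀, V₂ z ≤ M := by
    obtain ⟨C, hC⟩ := isCompact_Icc.exists_bound_of_continuousOn
      (s := Set.Icc (0:ℝ) x₀) hV.smooth.continuous.continuousOn
    refine ⟨max C 0, le_max_right _ _, fun z hz => ?_⟩
    calc V₂ z ≤ |V₂ z| := le_abs_self _
      _ = ‖V₂ z‖ := rfl
      _ ≤ C := hC z hz
      _ ≤ max C 0 := le_max_left _ _
  set G : ℝ → ℝ := fun x => (1 + |x| ^ β)⁻¹ with hGdef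
  have hGval : ∀ z, G z = (1 + |z| ^ β)⁻¹ := fun z => rfl
  have hpow_nonneg : ∀ x : ℝ, 0 ≤ |x| ^ β := fun x => Real.rpow_nonneg (abs_nonneg x) β
  have hGpos : ∀ x, 0 < G x := fun x => by
    have := hpow_nonneg x; rw [hGval]; positivity
  have hGle1 : ∀ x, G x ≤ 1 := fun x => by
    have := hpow_nonneg x
    rw [hGval, inv_le_one_iff₀]; right; linarith
  have hGanti : ∀ a b : ℝ, 0 ≤ a → a ≤ b → G b ≤ G a := by
    intro a b ha hab
    have h1 : |a| ^ β ≤ |b| ^ β := by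
      rw [abs_of_nonneg ha, abs_of_nonneg (ha.trans hab)]
      exact Real.rpow_le_rpow ha hab hβ.le
    rw [hGval, hGval]
    have := hpow_nonneg a
    apply inv_anti₀ (by linarith) (by linarith)
  have hGlb : ∀ z w : ℝ, |z| ^ β ≤ w → 1 - w ≤ G z := by
    intro z w hw
    rw [hGval]
    calc 1 - w ≤ 1 - |z| ^ β := by linarith
      _ ≤ (1 + |z| ^ β)⁻¹ := one_sub_le_inv_one_add _ (hpow_nonneg z)
  have hGcont : Continuous G := by
    have habs : Continuous fun x : ℝ => |x| ^ β := by
      rw [continuous_iff_continuousAt]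
      intro x
      exact (Real.continuousAt_rpow_const _ _ (Or.inr hβ.le)).comp continuous_abs.continuousAt
    rw [hGdef]
    apply Continuous.inv₀ (by continuity)
    intro x
    have := hpow_nonneg x; positivity
  -- key uniform estimate
  have key : ∀ ε > (0:ℝ), ∀ᶠ t in atTop,
      ∀ x : ℝ, |(1 + V₂ (t * x) / V₂ t)⁻¹ - (1 + |x| ^ β)⁻¹| ≤ ε := by
    intro ε hε
    -- choose δ
    obtain ⟨δ, hδpos, hδβ⟩ : ∃ δ : ℝ, 0 < δ ∧ δ ^ β ≤ ε / 3 := by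
      refine ⟨min 1 ((ε / 3) ^ (1 / β)), lt_min one_pos (Real.rpow_pos_of_pos (by linarith) _), ?_⟩
      calc (min 1 ((ε / 3) ^ (1 / β))) ^ β ≤ ((ε / 3) ^ (1 / β)) ^ β :=
            Real.rpow_le_rpow (le_min zero_le_one (Real.rpow_pos_of_pos (by linarith) _).le)
              (min_le_right _ _) hβ.le
        _ = ε / 3 := by
            rw [← Real.rpow_mul (by positivity), one_div_mul_cancel hβ.ne', Real.rpow_one]
    -- choose X
    obtain ⟨X, hδX, hGX⟩ : ∃ X : ℝ, δ + 1 ≤ X ∧ G X ≤ ε / 3 := by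
      refine ⟨max (δ + 1) ((3 / ε) ^ (1 / β)), le_max_left _ _, ?_⟩
      set X := max (δ + 1) ((3 / ε) ^ (1 / β)) with hXdef
      have hXpos : 0 < X := lt_of_lt_of_le (by linarith) (le_max_left _ _)
      have h2 : 3 / ε ≤ |X| ^ β := by
        rw [abs_of_nonneg hXpos.le]
        calc 3 / ε = ((3 / ε) ^ (1 / β)) ^ β := by
              rw [← Real.rpow_mul (by positivity), one_div_mul_cancel hβ.ne', Real.rpow_one]
          _ ≤ X ^ β := Real.rpow_le_rpow (by positivity) (le_max_right _ _) hβ.le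
      have h3 : G X ≤ (3 / ε)⁻¹ := by
        rw [hGval]
        apply inv_anti₀ (by positivity) (by linarith)
      rw [inv_div] at h3
      linarith
    have hδltX : δ < X := by linarith
    have hXpos : 0 < X := by linarith
    -- uniform continuity of G on [δ, X]
    have hUC := (isCompact_Icc (a := δ) (b := X)).uniformContinuousOn_of_continuous
      hGcont.continuousOn
    rw [Metric.uniformContinuousOn_iff] at hUC
    obtain ⟨η, hηpos, hUC⟩ := hUC (ε / 3) (by positivity)
    -- grid
    obtain ⟨n, hn⟩ := exists_nat_gt ((X - δ) / η)
    have hXδpos : 0 < X - δ := by linarith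
    have hn0 : 0 < (n:ℝ) := lt_of_lt_of_le (by positivity) hn.le
    have hnn : n ≠ 0 := by exact_mod_cast hn0.ne'
    set s : ℝ := (X - δ) / n with hsdef
    have hspos : 0 < s := div_pos hXδpos hn0
    have hsη : s < η := by
      have h1 : X - δ < n * η := (div_lt_iff₀ hηpos).mp hn
      rw [hsdef, div_lt_iff₀ hn0]
      linarith [mul_comm (n:ℝ) η]
    set P : ℕ → ℝ := fun i => δ + i * s with hPdef
    have hPval : ∀ i : ℕ, P i = δ + i * s := fun i => rfl
    have hP0 : P 0 = δ := by rw [hPval]; simp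
    have hXeq : X = δ + n * s := by
      rw [hsdef]; field_simp; ring
    have hPn : P n = X := by rw [hPval, hXeq]
    have hPpos : ∀ i : ℕ, 0 < P i := by
      intro i
      have h1 : (0:ℝ) ≤ i * s := by positivity
      rw [hPval]; linarith
    have hPmem : ∀ i : ℕ, i ≤ n → P i ∈ Set.Icc δ X := by
      intro i hi
      constructor
      · have h1 : (0:ℝ) ≤ i * s := by positivity
        rw [hPval]; linarith
      · rw [hXeq, hPval, add_le_add_iff_left]
        apply mul_le_mul_of_nonneg_right _ hspos.le
        exact_mod_cast hi
    -- eventual conditions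
    have E2 : ∀ᶠ t in atTop, max 1 (3 * (M + 1) / ε) ≤ V₂ t := htop.eventually_ge_atTop _
    have E3 : ∀ᶠ t in atTop, ∀ i ∈ Finset.range (n + 1),
        |(1 + V₂ (t * P i) / V₂ t)⁻¹ - G (P i)| < ε / 3 := by
      rw [eventually_all_finset]
      intro i _
      have hreg := hV.reg_var (P i) (hPpos i)
      have hlim : Tendsto (fun t => (1 + V₂ (t * P i) / V₂ t)⁻¹) atTop (nhds (G (P i))) := by
        rw [hGval]
        apply Tendsto.inv₀ (tendsto_const_nhds.add hreg)
        have := hpow_nonneg (P i); positivity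
      have h1 := Metric.tendsto_nhds.mp hlim (ε / 3) (by positivity)
      filter_upwards [h1] with t ht
      rwa [Real.dist_eq] at ht
    filter_upwards [eventually_ge_atTop ((x₀ + 1) / δ), eventually_ge_atTop (1:ℝ), E2, E3]
      with t ht1 ht2 hE2 hE3
    intro x
    -- basic facts about t
    have ht0 : 0 < t := lt_of_lt_of_le one_pos ht2
    have hVt1 : 1 ≤ V₂ t := le_trans (le_max_left _ _) hE2
    have hVtpos : 0 < V₂ t := lt_of_lt_of_le one_pos hVt1
    have htδ : x₀ < t * δ := by
      rw [div_le_iff₀ hδpos] at ht1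
      linarith
    have hWnonneg : ∀ z : ℝ, 0 ≤ V₂ (t * z) / V₂ t := fun z =>
      div_nonneg (hV.nonneg _) hVtpos.le
    have hFpos : ∀ z : ℝ, 0 < (1 + V₂ (t * z) / V₂ t)⁻¹ := fun z => by
      have := hWnonneg z; positivity
    have hFle1 : ∀ z : ℝ, (1 + V₂ (t * z) / V₂ t)⁻¹ ≤ 1 := fun z => by
      have := hWnonneg z
      rw [inv_le_one_iff₀]; right; linarith
    have hFanti : ∀ a b : ℝ, δ ≤ a → a ≤ b →
        (1 + V₂ (t * b) / V₂ t)⁻¹ ≤ (1 + V₂ (t * a) / V₂ t)⁻¹ := by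
      intro a b ha hab
      have hta : t * δ ≤ t * a := mul_le_mul_of_nonneg_left ha ht0.le
      have htb : t * a ≤ t * b := mul_le_mul_of_nonneg_left hab ht0.le
      have h1 : V₂ (t * a) ≤ V₂ (t * b) := by
        apply hmonoV (Set.mem_Ici.mpr (by linarith)) (Set.mem_Ici.mpr (by linarith)) htb
      have h2 : V₂ (t * a) / V₂ t ≤ V₂ (t * b) / V₂ t := by gcongr
      have := hWnonneg a
      apply inv_anti₀ (by linarith) (by linarith)
    have hFlb : ∀ z w : ℝ, V₂ (t * z) / V₂ t ≤ w → 1 - w ≤ (1 + V₂ (t * z) / V₂ t)⁻¹ := by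
      intro z w hw
      calc 1 - w ≤ 1 - V₂ (t * z) / V₂ t := by linarith
        _ ≤ (1 + V₂ (t * z) / V₂ t)⁻¹ := one_sub_le_inv_one_add _ (hWnonneg z)
    -- reduce to y = |x|
    have hVeven : V₂ (t * x) = V₂ (t * |x|) := by
      rcases le_or_gt 0 x with h | h
      · rw [abs_of_nonneg h]
      · rw [abs_of_neg h, mul_neg, hV.even]
    have hGx : G |x| = (1 + |x| ^ β)⁻¹ := by rw [hGval, abs_abs]
    rw [hVeven, ← hGx]
    set y : ℝ := |x| with hydef
    have hy0 : 0 ≤ y := abs_nonneg x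
    rcases le_or_gt y δ with hyδ | hyδ
    · -- Case 1 : y ≤ δ
      have hGy : 1 - ε / 3 ≤ G y := by
        apply hGlb
        rw [abs_of_nonneg hy0]
        calc y ^ β ≤ δ ^ β := Real.rpow_le_rpow hy0 hyδ hβ.le
          _ ≤ ε / 3 := hδβ
      have hFy : 1 - 2 * ε / 3 ≤ (1 + V₂ (t * y) / V₂ t)⁻¹ := by
        rcases le_or_gt (t * y) x₀ with hty | hty
        · have h1 : V₂ (t * y) ≤ M := hM _ ⟨by positivity, hty⟩
          have h2 : 3 * (M + 1) / ε ≤ V₂ t := le_trans (le_max_right _ _) hE2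
          have h3 : M ≤ ε / 3 * V₂ t := by
            have hc : ε / 3 * (3 * (M + 1) / ε) = M + 1 := by field_simp
            nlinarith
          have h4 : V₂ (t * y) / V₂ t ≤ ε / 3 := by
            rw [div_le_iff₀ hVtpos]; nlinarith
          have := hFlb y (ε / 3) h4
          linarith
        · have h2 : (1 + V₂ (t * δ) / V₂ t)⁻¹ ≤ (1 + V₂ (t * y) / V₂ t)⁻¹ := by
            have h1 : V₂ (t * y) ≤ V₂ (t * δ) := by
              apply hmonoV (Set.mem_Ici.mpr hty.le) (Set.mem_Ici.mpr htδ.le)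
              exact mul_le_mul_of_nonneg_left hyδ ht0.le
            have h2' : V₂ (t * y) / V₂ t ≤ V₂ (t * δ) / V₂ t := by gcongr
            have := hWnonneg y
            apply inv_anti₀ (by linarith) (by linarith)
          have h3 := hE3 0 (Finset.mem_range.mpr (by omega))
          rw [hP0] at h3
          have h4 : 1 - ε / 3 ≤ G δ := by
            apply hGlb; rw [abs_of_nonneg hδpos.le]; exact hδβ
          rw [abs_lt] at h3
          linarith [h3.1]
      rw [abs_le]
      constructor
      · have := hGle1 y; linarith
      · have := hFle1 y; linarith
    rcases lt_or_ge y X with hyX | hyX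
    · -- Case 2 : δ < y < X
      set i : ℕ := ⌊(y - δ) / s⌋₊ with hidef
      have hfrac_nonneg : 0 ≤ (y - δ) / s := by
        apply div_nonneg _ hspos.le; linarith
      have hile : (i:ℝ) ≤ (y - δ) / s := Nat.floor_le hfrac_nonneg
      have hilt : (y - δ) / s < i + 1 := Nat.lt_floor_add_one _
      have hin : i < n := by
        have h1 : (y - δ) / s < n := by
          rw [div_lt_iff₀ hspos]
          have h2 : X - δ = n * s := by rw [hXeq]; ring
          linarith
        have h2 : (i:ℝ) < n := lt_of_le_of_lt hile h1
        exact_mod_cast h2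
      have hyi : P i ≤ y := by
        have h1 : (i:ℝ) * s ≤ y - δ := by
          rw [← le_div_iff₀ hspos]; exact hile
        rw [hPval]; linarith
      have hyi1 : y ≤ P (i + 1) := by
        have h1 : y - δ < ((i:ℝ) + 1) * s := by
          rw [← div_lt_iff₀ hspos]; exact hilt
        rw [hPval]; push_cast; linarith
      have hPd : P (i + 1) - P i = s := by rw [hPval, hPval]; push_cast; ring
      have hGdiff : |G (P i) - G (P (i + 1))| < ε / 3 := by
        have h1 := hUC (P i) (hPmem i (by omega)) (P (i + 1)) (hPmem (i + 1) (by omega))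
          (by rw [Real.dist_eq, show P i - P (i+1) = -s by linarith [hPd], abs_neg,
                abs_of_nonneg hspos.le]
              exact hsη)
        rwa [Real.dist_eq] at h1
      have h3i := hE3 i (Finset.mem_range.mpr (by omega))
      have h3i1 := hE3 (i + 1) (Finset.mem_range.mpr (by omega))
      rw [abs_lt] at h3i h3i1 hGdiff
      have hf1 : (1 + V₂ (t * y) / V₂ t)⁻¹ ≤ (1 + V₂ (t * P i) / V₂ t)⁻¹ :=
        hFanti (P i) y (hPmem i (by omega)).1 hyi
      have hf2 : (1 + V₂ (t * P (i + 1)) / V₂ t)⁻¹ ≤ (1 + V₂ (t * y) / V₂ t)⁻¹ :=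
        hFanti y (P (i + 1)) hyδ.le hyi1
      have hg1 : G y ≤ G (P i) := hGanti (P i) y (hPpos i).le hyi
      have hg2 : G (P (i + 1)) ≤ G y := hGanti y (P (i + 1)) (by linarith) hyi1
      rw [abs_le]
      constructor
      · linarith [h3i1.1, hGdiff.1]
      · linarith [h3i.2, hGdiff.2]
    · -- Case 3 : X ≤ y
      have hg1 : G y ≤ G X := hGanti X y hXpos.le hyX
      have hf1 : (1 + V₂ (t * y) / V₂ t)⁻¹ ≤ (1 + V₂ (t * X) / V₂ t)⁻¹ :=
        hFanti X y (by linarith) hyX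
      have h3n := hE3 n (Finset.mem_range.mpr (by omega))
      rw [hPn, abs_lt] at h3n
      rw [abs_le]
      constructor
      · have := hFpos y; have := hGpos y
        linarith
      · have := hGpos y
        linarith [h3n.2]
  -- conclude
  rw [Metric.tendsto_nhds]
  intro ε hε
  filter_upwards [key (ε / 2) (half_pos hε)] with t ht
  rw [Real.dist_eq, sub_zero]
  have h0 : 0 ≤ iotaR V₂ β t := by
    rw [iotaR]
    exact Real.iSup_nonneg fun x => abs_nonneg _
  rw [abs_of_nonneg h0]
  have h1 : iotaR V₂ β t ≤ ε / 2 := by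
    rw [iotaR]
    exact ciSup_le ht
  linarith
end

section
/- Let r : [0,∞) → (0,∞) be continuously differentiable, eventually increasing (r'(y) > 0 for all large y), regularly varying at infinity with positive index (i.e., there is β > 0 with lim_{t→+∞} r(ty)/r(t) = y^β for every y > 0), and suppose |r'(y)| ≤ c·r(y)·y^{−1} for all large y and some c > 0. Then the following three conditions hold: (1) there is C₁ > 0 with ∫₀^y r(u)^{3/2} du ≤ C₁·y·r(y)^{3/2} for all large y; (2) there is C₂ > 0 with |r'(y)|·r(y)^{−5/2}·∫₀^y r(u)^{3/2} du ≤ C₂ for all large y; (3) r(y)^{1/2}/∫₀^y r(u)^{3/2} du → 0 as y → +∞. -/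
open MeasureTheory Filter

/-- second part of Proposition `prop:batty`: a regularly varying,
eventually increasing C¹ rate r with |r'(y)| ≲ r(y)/y satisfies the three
integral conditions needed for the inverse spectral construction. -/
theorem statement18 (r : ℝ → ℝ) (β c : ℝ)
    (hpos : ∀ y ≥ (0:ℝ), 0 < r y)
    (hC1 : ContDiffOn ℝ 1 r (Set.Ici (0:ℝ)))
    (hincr : ∀ᶠ y in atTop, 0 < deriv r y)
    (hβ : 0 < β)
    (hreg : ∀ y > (0:ℝ), Tendsto (fun t => r (t * y) / r t) atTop (nhds (y ^ β)))
    (hc : 0 < c)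
    (hbound : ∀ᶠ y in atTop, |deriv r y| ≤ c * r y / y) :
    (∃ C₁ > 0, ∀ᶠ y in atTop,
        (∫ u in (0:ℝ)..y, r u ^ ((3:ℝ)/2)) ≤ C₁ * y * r y ^ ((3:ℝ)/2)) ∧
    (∃ C₂ > 0, ∀ᶠ y in atTop,
        |deriv r y| * r y ^ (-(5:ℝ)/2) * (∫ u in (0:ℝ)..y, r u ^ ((3:ℝ)/2)) ≤ C₂) ∧
    Tendsto (fun y => r y ^ ((1:ℝ)/2) / ∫ u in (0:ℝ)..y, r u ^ ((3:ℝ)/2))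
      atTop (nhds 0) := by
  obtain ⟨a₀, ha₀⟩ := eventually_atTop.1 (hincr.and hbound)
  set a : ℝ := max a₀ 1 with ha_def
  have ha1 : (1:ℝ) ≤ a := le_max_right _ _
  have ha0 : (0:ℝ) ≤ a := by linarith
  have hra : 0 < r a := hpos a ha0
  -- monotonicity of r on [a, ∞)
  have hmono : MonotoneOn r (Set.Ici a) := by
    refine (strictMonoOn_of_deriv_pos (convex_Ici a) ?_ ?_).monotoneOn
    · exact hC1.continuousOn.mono (Set.Ici_subset_Ici.mpr ha0)
    · intro x hx
      rw [interior_Ici] at hx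
      exact (ha₀ x (le_of_lt (lt_of_le_of_lt (le_max_left _ _) hx))).1
  -- integrand basics
  set g : ℝ → ℝ := fun u => r u ^ ((3:ℝ)/2) with hg_def
  have hgpos : ∀ u, 0 ≤ u → 0 < g u := fun u hu => Real.rpow_pos_of_pos (hpos u hu) _
  have hgc : ContinuousOn g (Set.Ici 0) :=
    hC1.continuousOn.rpow_const (fun x _ => Or.inr (by norm_num))
  have hgint : ∀ p q : ℝ, 0 ≤ p → 0 ≤ q → IntervalIntegrable g volume p q := by
    intro p q hp hq
    refine (hgc.mono ?_).intervalIntegrable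
    intro u hu
    rw [Set.uIcc_eq_union] at hu
    rcases hu with hu | hu
    · exact le_trans hp hu.1
    · exact le_trans hq hu.1
  set f : ℝ → ℝ := fun y => ∫ u in (0:ℝ)..y, g u with hf_def
  -- lower bound of pieces of the integral
  have hsplit : ∀ p q : ℝ, 0 ≤ p → p ≤ q → f q = f p + ∫ u in p..q, g u := by
    intro p q hp hpq
    rw [hf_def]
    exact (intervalIntegral.integral_add_adjacent_intervals (hgint 0 p le_rfl hp)
      (hgint p q hp (hp.trans hpq))).symm
  have hfnonneg : ∀ p q : ℝ, 0 ≤ p → p ≤ q → 0 ≤ ∫ u in p..q, g u := by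
    intro p q hp hpq
    exact intervalIntegral.integral_nonneg hpq (fun u hu => (hgpos u (hp.trans hu.1)).le)
  -- Part (1): the eventual inequality with C₁ = 2
  have h1ev : ∀ᶠ y in atTop, f y ≤ 2 * y * r y ^ ((3:ℝ)/2) := by
    have hrapos : 0 < r a ^ ((3:ℝ)/2) := Real.rpow_pos_of_pos hra _
    filter_upwards [eventually_ge_atTop (max a (f a / r a ^ ((3:ℝ)/2)))] with y hy
    have hya : a ≤ y := le_trans (le_max_left _ _) hy
    have hy0 : 0 < y := lt_of_lt_of_le (by linarith) hya
    have h1 : f a ≤ y * r a ^ ((3:ℝ)/2) := by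
      rw [← div_le_iff₀ hrapos]
      exact le_trans (le_max_right _ _) hy
    have hray : r a ≤ r y := hmono (Set.self_mem_Ici) hya hya
    have hrypos : 0 < r y := lt_of_lt_of_le hra hray
    have h2 : (∫ u in a..y, g u) ≤ (y - a) * r y ^ ((3:ℝ)/2) := by
      have := intervalIntegral.integral_mono_on hya (hgint a y ha0 hy0.le)
        (intervalIntegrable_const) (fun u hu => by
          exact Real.rpow_le_rpow (hpos u (ha0.trans hu.1)).le
            (hmono hu.1 (hu.1.trans hu.2) hu.2) (by norm_num))
      simpa [smul_eq_mul] using this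
    have h3 : r a ^ ((3:ℝ)/2) ≤ r y ^ ((3:ℝ)/2) :=
      Real.rpow_le_rpow hra.le hray (by norm_num)
    have := hsplit a y ha0 hya
    nlinarith [Real.rpow_pos_of_pos hrypos ((3:ℝ)/2)]
  refine ⟨⟨2, by norm_num, h1ev⟩, ⟨2 * c, by positivity, ?_⟩, ?_⟩
  · -- Part (2)
    filter_upwards [h1ev, eventually_ge_atTop (max a 1), hbound] with y h1 hy hb
    have hy1 : (1:ℝ) ≤ y := le_trans (le_max_right _ _) hy
    have hy0 : 0 < y := by linarith
    have hya : a ≤ y := le_trans (le_max_left _ _) hy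
    have hr : 0 < r y := hpos y hy0.le
    have hAB : r y ^ (-(5:ℝ)/2) * r y ^ ((3:ℝ)/2) = (r y)⁻¹ := by
      rw [← Real.rpow_add hr]
      norm_num
      rw [Real.rpow_neg_one]
    have hfnn : 0 ≤ f y := hfnonneg 0 y le_rfl hy0.le
    have step : |deriv r y| * r y ^ (-(5:ℝ)/2) * f y
        ≤ (c * r y / y) * r y ^ (-(5:ℝ)/2) * (2 * y * r y ^ ((3:ℝ)/2)) := by
      have hAnn : (0:ℝ) ≤ r y ^ (-(5:ℝ)/2) := (Real.rpow_pos_of_pos hr _).le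
      have := mul_le_mul hb le_rfl hAnn (by positivity)
      exact mul_le_mul this h1 hfnn (by positivity)
    refine step.trans (le_of_eq ?_)
    have : (c * r y / y) * r y ^ (-(5:ℝ)/2) * (2 * y * r y ^ ((3:ℝ)/2))
        = 2 * c * (r y ^ (-(5:ℝ)/2) * r y ^ ((3:ℝ)/2) * r y) * (y / y) := by ring
    rw [this, hAB, inv_mul_cancel₀ hr.ne', div_self hy0.ne']
    ring
  · -- Part (3)
    set K : ℝ := 2 ^ β + 1 with hK_def
    have hKpos : 0 < K := by positivity
    set k : ℝ := K ^ ((1:ℝ)/2) with hk_def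
    have hkpos : 0 < k := Real.rpow_pos_of_pos hKpos _
    have hKev : ∀ᶠ t in atTop, r (t * 2) ≤ K * r t := by
      filter_upwards [(hreg 2 two_pos).eventually_le_const (lt_add_one _),
        eventually_ge_atTop (0:ℝ)] with t ht ht0
      have hrt : 0 < r t := hpos t ht0
      rw [div_le_iff₀ hrt] at ht
      rw [hK_def]
      linarith
    obtain ⟨t₂, ht₂⟩ := eventually_atTop.1 (hKev.and (eventually_ge_atTop a))
    have squeeze := tendsto_of_tendsto_of_tendsto_of_le_of_le'
      (tendsto_const_nhds : Tendsto (fun _ : ℝ => (0:ℝ)) atTop (nhds 0))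
      ((tendsto_const_nhds (x := 2 * k / r a)).div_atTop tendsto_id)
      (f := fun y => r y ^ ((1:ℝ)/2) / f y) ?_ ?_
    · simpa using squeeze
    · -- lower bound 0 ≤ ratio
      filter_upwards [eventually_ge_atTop (max 1 (2 * max t₂ a))] with y hy
      have hy0 : 0 < y := lt_of_lt_of_le one_pos (le_trans (le_max_left _ _) hy)
      have : 0 ≤ f y := hfnonneg 0 y le_rfl hy0.le
      exact div_nonneg (Real.rpow_nonneg (hpos y hy0.le).le _) this
    · -- upper bound ratio ≤ M / y
      filter_upwards [eventually_ge_atTop (max 1 (2 * max t₂ a))] with y hy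
      have hy1 : (1:ℝ) ≤ y := le_trans (le_max_left _ _) hy
      have hy0 : 0 < y := by linarith
      have hyt : 2 * max t₂ a ≤ y := le_trans (le_max_right _ _) hy
      have hht : max t₂ a ≤ y / 2 := by linarith
      have hta : a ≤ y / 2 := le_trans (le_max_right _ _) hht
      have htt : t₂ ≤ y / 2 := le_trans (le_max_left _ _) hht
      have hh0 : 0 < y / 2 := by linarith
      have hs : 0 < r (y/2) := hpos _ hh0.le
      have hr : 0 < r y := hpos y hy0.le
      have hras : r a ≤ r (y/2) := hmono Set.self_mem_Ici hta hta
      -- r y ≤ K * r (y/2)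
      have hKy : r y ≤ K * r (y/2) := by
        have := (ht₂ (y/2) htt).1
        rwa [div_mul_cancel₀ y two_ne_zero] at this
      -- numerator bound
      have hnum : r y ^ ((1:ℝ)/2) ≤ k * r (y/2) ^ ((1:ℝ)/2) := by
        calc r y ^ ((1:ℝ)/2) ≤ (K * r (y/2)) ^ ((1:ℝ)/2) :=
              Real.rpow_le_rpow hr.le hKy (by norm_num)
          _ = k * r (y/2) ^ ((1:ℝ)/2) := Real.mul_rpow hKpos.le hs.le
      -- denominator lower bound
      have hC32 : r (y/2) ^ ((3:ℝ)/2) = r (y/2) ^ ((1:ℝ)/2) * r (y/2) := by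
        rw [show (3:ℝ)/2 = 1/2 + 1 by norm_num, Real.rpow_add hs, Real.rpow_one]
      have hlow : (y/2) * r (y/2) ^ ((3:ℝ)/2) ≤ f y := by
        have hcmp : (∫ u in (y/2)..y, (r (y/2) ^ ((3:ℝ)/2) : ℝ)) ≤ ∫ u in (y/2)..y, g u := by
          refine intervalIntegral.integral_mono_on (by linarith) intervalIntegrable_const
            (hgint (y/2) y hh0.le hy0.le) (fun u hu => ?_)
          exact Real.rpow_le_rpow hs.le (hmono hta (hta.trans hu.1) hu.1) (by norm_num)
        have hconst : (∫ u in (y/2)..y, (r (y/2) ^ ((3:ℝ)/2) : ℝ))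
            = (y/2) * r (y/2) ^ ((3:ℝ)/2) := by
          rw [intervalIntegral.integral_const, smul_eq_mul]
          ring_nf
        have := hsplit (y/2) y hh0.le (by linarith)
        have h0half : 0 ≤ f (y/2) := hfnonneg 0 (y/2) le_rfl hh0.le
        linarith [hcmp, hconst ▸ hcmp]
      have hCpos : 0 < r (y/2) ^ ((3:ℝ)/2) := Real.rpow_pos_of_pos hs _
      have hfpos : 0 < f y := lt_of_lt_of_le (by positivity) hlow
      show r y ^ ((1:ℝ)/2) / f y ≤ 2 * k / r a / y
      rw [div_le_div_iff₀ hfpos hy0]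
      -- goal : r y ^ (1/2) * y ≤ 2 * k / r a * f y
      have hBpos : 0 < r (y/2) ^ ((1:ℝ)/2) := Real.rpow_pos_of_pos hs _
      have key : r y ^ ((1:ℝ)/2) * y * r a ≤ 2 * k * f y := by
        have hlow' : y / 2 * (r (y/2) ^ ((1:ℝ)/2) * r (y/2)) ≤ f y := by
          rw [← hC32]; exact hlow
        have e1 := mul_le_mul_of_nonneg_right
          (mul_le_mul_of_nonneg_right hnum hy0.le) hra.le
        have e2 := mul_le_mul_of_nonneg_left hras
          (mul_pos hkpos (mul_pos hBpos hy0)).le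
        have e3 := mul_le_mul_of_nonneg_left hlow'
          (by positivity : (0:ℝ) ≤ 2 * k)
        nlinarith [e1, e2, e3]
      rw [show 2 * k / r a * f y = 2 * k * f y / r a by ring, le_div_iff₀ hra]
      linarith
end
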